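/- Let c>0. As η→0⁺ one has I₀(c(1−η)) = π/(2c) + O(η) and I₁(c(1−η)) = (1/(2c))·log(8/η) + O(η·log(1/η)); that is, there exist constants C>0 and η₀>0 such that for all 0<η<η₀, |I₀(c(1−η)) − π/(2c)| ≤ C·η and |I₁(c(1−η)) − (1/(2c))·log(8/η)| ≤ C·η·log(1/η). -/

import Mathlib

open Real MeasureTheory intervalIntegral Set

/-- `I₀(d) = ∫_d^c dy/√((c²−y²)(y²−d²))`. -/
noncomputable def I0 (c d : ℝ) : ℝ :=
  ∫ y in d..c, 1 / Real.sqrt ((c^2 - y^2) * (y^2 - d^2))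

/-- `I₁(d) = ∫₀^d dy/√((c²−y²)(d²−y²))`. -/
noncomputable def I1 (c d : ℝ) : ℝ :=
  ∫ y in (0:ℝ)..d, 1 / Real.sqrt ((c^2 - y^2) * (d^2 - y^2))


lemma inv_sqrt_eq_rpow (x : ℝ) : (Real.sqrt x)⁻¹ = x ^ (-(1/2) : ℝ) := by
  rcases lt_or_ge x 0 with h | h
  · rw [Real.sqrt_eq_zero_of_nonpos h.le, inv_zero, Real.rpow_def_of_neg h]
    norm_num [show ((1:ℝ)/2)*π = π/2 from by ring, Real.cos_pi_div_two]
  · rw [Real.sqrt_eq_rpow, ← Real.rpow_neg h]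

lemma II_inv_sqrt_sub (r a b : ℝ) :
    IntervalIntegrable (fun y => (Real.sqrt (y - r))⁻¹) volume a b := by
  have h := (intervalIntegral.intervalIntegrable_rpow' (a := a - r) (b := b - r)
    (r := (-(1/2) : ℝ)) (by norm_num)).comp_add_right (-r)
  simp only [inv_sqrt_eq_rpow]
  norm_num at h ⊢
  convert h using 2
  rw [sub_eq_add_neg]

lemma II_inv_sqrt_sub' (r a b : ℝ) :
    IntervalIntegrable (fun y => (Real.sqrt (r - y))⁻¹) volume a b := by
  have h := (intervalIntegral.intervalIntegrable_rpow' (a := r - a) (b := r - b)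
    (r := (-(1/2) : ℝ)) (by norm_num)).comp_sub_left r
  simp only [inv_sqrt_eq_rpow]
  norm_num at h ⊢
  convert h using 2


lemma II_mono {a b : ℝ} (hab : a ≤ b) {f g : ℝ → ℝ}
    (hg : IntervalIntegrable g volume a b)
    (hm : AEStronglyMeasurable f (volume.restrict (Set.uIoc a b)))
    (hb : ∀ y ∈ Ioc a b, |f y| ≤ g y) :
    IntervalIntegrable f volume a b := by
  apply hg.mono_fun hm
  rw [uIoc_of_le hab]
  filter_upwards [ae_restrict_mem measurableSet_Ioc] with y hy
  simpa [abs_of_nonneg ((abs_nonneg _).trans (hb y hy))] using hb y hy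

lemma meas_inv_sqrt_quad (c d a b : ℝ) :
    AEStronglyMeasurable (fun y => (Real.sqrt ((c - y) * (y - d)))⁻¹)
      (volume.restrict (Set.uIoc a b)) :=
  ((Real.continuous_sqrt.measurable.comp ((measurable_const.sub measurable_id).mul
    (measurable_id.sub measurable_const))).inv).aestronglyMeasurable

lemma II_sing {d c : ℝ} (h : d < c) :
    IntervalIntegrable (fun y => (Real.sqrt ((c - y) * (y - d)))⁻¹) volume d c := by
  set m := (d + c) / 2 with hm
  have hdm : d < m := by simp only [hm]; linarith
  have hmc : m < c := by simp only [hm]; linarith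
  apply IntervalIntegrable.trans (b := m)
  · apply II_mono hdm.le (((II_inv_sqrt_sub d d m).const_mul (Real.sqrt (c - m))⁻¹))
      (meas_inv_sqrt_quad c d d m)
    intro y hy
    have h1 : (0:ℝ) < c - y := by linarith [hy.2]
    have h2 : (0:ℝ) < y - d := by linarith [hy.1]
    rw [Real.sqrt_mul h1.le, abs_of_nonneg (by positivity), mul_inv]
    apply mul_le_mul_of_nonneg_right _ (by positivity)
    apply inv_anti₀ (Real.sqrt_pos.mpr (by simp only [hm]; linarith))
    exact Real.sqrt_le_sqrt (by linarith [hy.2])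
  · apply II_mono hmc.le (((II_inv_sqrt_sub' c m c).const_mul (Real.sqrt (m - d))⁻¹))
      (meas_inv_sqrt_quad c d m c)
    intro y hy
    have h2 : (0:ℝ) < y - d := by linarith [hy.1]
    rw [Real.sqrt_mul (by linarith [hy.2] : (0:ℝ) ≤ c - y), abs_of_nonneg (by positivity),
      mul_inv, mul_comm]
    apply mul_le_mul_of_nonneg_right _ (by positivity)
    apply inv_anti₀ (Real.sqrt_pos.mpr (by simp only [hm]; linarith))
    exact Real.sqrt_le_sqrt (by linarith [hy.1])

lemma arcsine_integral {d c : ℝ} (h : d < c) :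
    ∫ y in d..c, (Real.sqrt ((c - y) * (y - d)))⁻¹ = π := by
  have hcd : (0:ℝ) < c - d := by linarith
  have key := intervalIntegral.integral_eq_sub_of_hasDerivAt_of_le (a := d) (b := c)
    (f := fun y => Real.arcsin ((2*y - c - d)/(c - d)))
    (f' := fun y => (Real.sqrt ((c - y) * (y - d)))⁻¹) h.le
    ?_ ?_ (II_sing h)
  · rw [key]
    have e1 : (2*c - c - d)/(c - d) = 1 := by rw [div_eq_one_iff_eq hcd.ne']; ring
    have e2 : (2*d - c - d)/(c - d) = -1 := by rw [div_eq_iff hcd.ne']; ring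
    simp only [e1, e2, Real.arcsin_one, Real.arcsin_neg_one]
    ring
  · exact (Real.continuous_arcsin.comp (by continuity)).continuousOn
  · intro y hy
    have h1 : (0:ℝ) < c - y := by linarith [hy.2]
    have h2 : (0:ℝ) < y - d := by linarith [hy.1]
    have hS : (0:ℝ) < Real.sqrt ((c - y) * (y - d)) := Real.sqrt_pos.mpr (by positivity)
    have hss : (Real.sqrt ((c - y) * (y - d)))^2 = (c - y) * (y - d) :=
      Real.sq_sqrt (by positivity)
    have hsq : Real.sqrt (1 - ((2*y - c - d)/(c - d))^2)
        = 2 * Real.sqrt ((c - y) * (y - d)) / (c - d) := by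
      have expand : (2 * Real.sqrt ((c - y) * (y - d)) / (c - d))^2
          = 4*((c-y)*(y-d))/(c-d)^2 := by rw [div_pow, mul_pow, hss]; norm_num
      rw [show 1 - ((2*y - c - d)/(c - d))^2 = (2 * Real.sqrt ((c - y) * (y - d)) / (c - d))^2
        from by rw [expand]; field_simp; ring, Real.sqrt_sq (by positivity)]
    have hu1 : (2*y - c - d)/(c - d) ≠ -1 := by
      intro hh; rw [div_eq_iff hcd.ne'] at hh; nlinarith [hy.1, hy.2]
    have hu2 : (2*y - c - d)/(c - d) ≠ 1 := by
      intro hh; rw [div_eq_iff hcd.ne'] at hh; nlinarith [hy.1, hy.2]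
    have inner : HasDerivAt (fun y : ℝ => (2*y - c - d)/(c - d)) (2/(c-d)) y := by
      have h0 : HasDerivAt (fun y : ℝ => 2*y - c - d) 2 y := by
        simpa [sub_sub] using ((hasDerivAt_id y).const_mul 2).sub_const (c + d)
      simpa [div_eq_mul_inv] using h0.div_const (c - d)
    have := (Real.hasDerivAt_arcsin hu1 hu2).comp y inner
    refine this.congr_deriv ?_
    rw [hsq]
    field_simp


lemma I0_est {c : ℝ} (hc : 0 < c) {η : ℝ} (hη : 0 < η) (hη' : η ≤ 1/4) :
    |I0 c (c*(1-η)) - π/(2*c)| ≤ (π/c) * η := by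
  set d := c*(1-η) with hd
  have hd0 : 0 < d := by rw [hd]; nlinarith
  have hdc : d < c := by rw [hd]; nlinarith
  set M := (Real.sqrt (2*d*(c+d)))⁻¹ with hM
  -- pointwise rewriting of the integrand
  have split : ∀ y ∈ Icc d c, 1 / Real.sqrt ((c^2 - y^2) * (y^2 - d^2))
      = (Real.sqrt ((c+y)*(y+d)))⁻¹ * (Real.sqrt ((c - y) * (y - d)))⁻¹ := by
    intro y hy
    rw [show (c^2 - y^2) * (y^2 - d^2) = ((c+y)*(y+d)) * ((c - y) * (y - d)) by ring,
      Real.sqrt_mul (by nlinarith [hy.1, hy.2] : (0:ℝ) ≤ (c+y)*(y+d)), one_div, mul_inv]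
  have hmeasf : ∀ a b : ℝ, AEStronglyMeasurable
      (fun y => 1 / Real.sqrt ((c^2 - y^2) * (y^2 - d^2))) (volume.restrict (Set.uIoc a b)) := by
    intro a b
    apply Measurable.aestronglyMeasurable
    apply Measurable.div measurable_const
    exact Real.continuous_sqrt.measurable.comp
      ((measurable_const.sub (measurable_id.pow measurable_const)).mul
        ((measurable_id.pow measurable_const).sub measurable_const))
  -- bounds on the regular factor
  have hreg : ∀ y ∈ Icc d c, (1:ℝ)/(2*c) ≤ (Real.sqrt ((c+y)*(y+d)))⁻¹ ∧
      (Real.sqrt ((c+y)*(y+d)))⁻¹ ≤ M := by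
    intro y hy
    have h1 : (0:ℝ) < (c+y)*(y+d) := by nlinarith [hy.1, hy.2]
    have hT : 0 < Real.sqrt ((c+y)*(y+d)) := Real.sqrt_pos.mpr h1
    constructor
    · rw [one_div]
      apply inv_anti₀ hT
      calc Real.sqrt ((c+y)*(y+d)) ≤ Real.sqrt ((2*c)^2) :=
            Real.sqrt_le_sqrt (by nlinarith [hy.1, hy.2])
        _ = 2*c := Real.sqrt_sq (by linarith)
    · apply inv_anti₀ (Real.sqrt_pos.mpr (by nlinarith))
      exact Real.sqrt_le_sqrt (by nlinarith [hy.1, hy.2])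
  -- integrability
  have hint : IntervalIntegrable (fun y => 1 / Real.sqrt ((c^2 - y^2) * (y^2 - d^2)))
      volume d c := by
    apply II_mono hdc.le ((II_sing hdc).const_mul M) (hmeasf d c)
    intro y hy
    have hy' : y ∈ Icc d c := Ioc_subset_Icc_self hy
    rw [split y hy', abs_of_nonneg (by positivity)]
    exact mul_le_mul_of_nonneg_right ((hreg y hy').2) (by positivity)
  have hlow : π/(2*c) ≤ I0 c d := by
    have h1 : ∫ y in d..c, (1/(2*c)) * (Real.sqrt ((c - y) * (y - d)))⁻¹ ≤ I0 c d := by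
      apply intervalIntegral.integral_mono_on hdc.le ((II_sing hdc).const_mul _) hint
      intro y hy
      rw [split y hy]
      exact mul_le_mul_of_nonneg_right ((hreg y hy).1) (by positivity)
    rwa [intervalIntegral.integral_const_mul, arcsine_integral hdc, one_div,
      inv_mul_eq_div] at h1
  have hup : I0 c d ≤ M * π := by
    have h1 : I0 c d ≤ ∫ y in d..c, M * (Real.sqrt ((c - y) * (y - d)))⁻¹ := by
      apply intervalIntegral.integral_mono_on hdc.le hint ((II_sing hdc).const_mul _)
      intro y hy
      rw [split y hy]
      exact mul_le_mul_of_nonneg_right ((hreg y hy).2) (by positivity)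
    rwa [intervalIntegral.integral_const_mul, arcsine_integral hdc] at h1
  -- numeric bound : M ≤ (1+2*η)/(2*c)
  have hMb : M ≤ (1+2*η)/(2*c) := by
    have hs : 2*c*(1-η) ≤ Real.sqrt (2*d*(c+d)) := by
      rw [show 2*d*(c+d) = (2*c*(1-η))^2 + 2*c^2*η*(1-η) by rw [hd]; ring]
      calc 2*c*(1-η) = Real.sqrt ((2*c*(1-η))^2) := (Real.sqrt_sq (by nlinarith)).symm
        _ ≤ _ := Real.sqrt_le_sqrt (by nlinarith)
    calc M ≤ (2*c*(1-η))⁻¹ := inv_anti₀ (by nlinarith) hs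
      _ ≤ (1+2*η)/(2*c) := by
          rw [inv_eq_one_div, div_le_div_iff₀ (by nlinarith) (by nlinarith)]
          nlinarith
  rw [abs_le]
  have hpos : (0:ℝ) ≤ π/c * η := by positivity
  constructor
  · linarith
  · have h3 : M * π ≤ (1+2*η)/(2*c) * π := mul_le_mul_of_nonneg_right hMb Real.pi_pos.le
    have h4 : (1+2*η)/(2*c)*π = π/(2*c) + π/c*η := by field_simp
    linarith


lemma frac_le_inv {y d S : ℝ} (hy0 : 0 ≤ y) (hyd : y ≤ d) (hd : 0 < d) (hS : 0 ≤ S) :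
    y / (d * S) ≤ S⁻¹ := by
  rcases eq_or_lt_of_le hS with h | h
  · simp [← h]
  · rw [div_le_iff₀ (by positivity)]
    calc y ≤ d := hyd
      _ = S⁻¹ * (d * S) := by field_simp

lemma S_lower {c d : ℝ} (hd : 0 < d) (hdc : d < c) {y : ℝ} (hy : y ∈ Ioc 0 d) :
    (Real.sqrt ((c^2 - y^2) * (d^2 - y^2)))⁻¹
      ≤ (Real.sqrt (c^2 - d^2) * Real.sqrt d)⁻¹ * (Real.sqrt (d - y))⁻¹ := by
  rcases eq_or_lt_of_le hy.2 with h | h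
  · subst h
    simp
  · have h1 : (0:ℝ) < c^2 - d^2 := by nlinarith
    have h2 : (0:ℝ) < d - y := by linarith
    have key : Real.sqrt (c^2 - d^2) * Real.sqrt d * Real.sqrt (d - y)
        ≤ Real.sqrt ((c^2 - y^2) * (d^2 - y^2)) := by
      rw [← Real.sqrt_mul h1.le, ← Real.sqrt_mul (by positivity)]
      apply Real.sqrt_le_sqrt
      have e1 : c^2 - d^2 ≤ c^2 - y^2 := by nlinarith [hy.1]
      have e2 : d*(d-y) ≤ d^2 - y^2 := by nlinarith [hy.1]
      calc (c^2-d^2)*d*(d-y) = (c^2-d^2)*(d*(d-y)) := by ring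
        _ ≤ (c^2-y^2)*(d^2-y^2) := mul_le_mul e1 e2 (by nlinarith [hy.1]) (by nlinarith [hy.1])
    calc (Real.sqrt ((c^2 - y^2) * (d^2 - y^2)))⁻¹
        ≤ (Real.sqrt (c^2 - d^2) * Real.sqrt d * Real.sqrt (d - y))⁻¹ :=
          inv_anti₀ (mul_pos (mul_pos (Real.sqrt_pos.mpr h1) (Real.sqrt_pos.mpr hd))
            (Real.sqrt_pos.mpr h2)) key
      _ = _ := by rw [mul_inv]

lemma measS (c d : ℝ) : Measurable (fun y : ℝ => Real.sqrt ((c^2 - y^2) * (d^2 - y^2))) :=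
  Real.continuous_sqrt.measurable.comp
    ((measurable_const.sub (measurable_id.pow measurable_const)).mul
      ((measurable_const.sub (measurable_id.pow measurable_const))))

lemma II_f {c d : ℝ} (hd : 0 < d) (hdc : d < c) :
    IntervalIntegrable (fun y => (Real.sqrt ((c^2 - y^2) * (d^2 - y^2)))⁻¹) volume 0 d := by
  apply II_mono hd.le ((II_inv_sqrt_sub' d 0 d).const_mul
    ((Real.sqrt (c^2 - d^2) * Real.sqrt d)⁻¹)) ((measS c d).inv.aestronglyMeasurable)
  intro y hy
  rw [Pi.inv_apply, abs_of_nonneg (by positivity)]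
  exact S_lower hd hdc hy

lemma II_fA {c d : ℝ} (hd : 0 < d) (hdc : d < c) :
    IntervalIntegrable (fun y => y / (d * Real.sqrt ((c^2 - y^2) * (d^2 - y^2))))
      volume 0 d := by
  apply II_mono hd.le ((II_inv_sqrt_sub' d 0 d).const_mul
    ((Real.sqrt (c^2 - d^2) * Real.sqrt d)⁻¹))
    ((measurable_id.div (measurable_const.mul (measS c d))).aestronglyMeasurable)
  intro y hy
  have h0 : |y / (d * Real.sqrt ((c^2 - y^2) * (d^2 - y^2)))|
      ≤ (Real.sqrt ((c^2 - y^2) * (d^2 - y^2)))⁻¹ := by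
    rw [abs_of_nonneg (div_nonneg hy.1.le (by positivity))]
    exact frac_le_inv hy.1.le hy.2 hd (Real.sqrt_nonneg _)
  exact h0.trans (S_lower hd hdc hy)

lemma II_fB {c d : ℝ} (hd : 0 < d) (hdc : d < c) :
    IntervalIntegrable (fun y => (d - y) / (d * Real.sqrt ((c^2 - y^2) * (d^2 - y^2))))
      volume 0 d := by
  apply II_mono hd.le ((II_inv_sqrt_sub' d 0 d).const_mul
    ((Real.sqrt (c^2 - d^2) * Real.sqrt d)⁻¹))
    (((measurable_const.sub measurable_id).div
      (measurable_const.mul (measS c d))).aestronglyMeasurable)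
  intro y hy
  have h0 : |(d - y) / (d * Real.sqrt ((c^2 - y^2) * (d^2 - y^2)))|
      ≤ (Real.sqrt ((c^2 - y^2) * (d^2 - y^2)))⁻¹ := by
    rw [abs_of_nonneg (div_nonneg (by linarith [hy.2]) (by positivity))]
    exact frac_le_inv (by linarith [hy.2]) (by linarith [hy.1]) hd (Real.sqrt_nonneg _)
  exact h0.trans (S_lower hd hdc hy)

lemma f_split {c d : ℝ} (hd : 0 < d) (y : ℝ) :
    (Real.sqrt ((c^2 - y^2) * (d^2 - y^2)))⁻¹
      = y / (d * Real.sqrt ((c^2 - y^2) * (d^2 - y^2)))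
        + (d - y) / (d * Real.sqrt ((c^2 - y^2) * (d^2 - y^2))) := by
  rcases eq_or_ne (Real.sqrt ((c^2 - y^2) * (d^2 - y^2))) 0 with h | h
  · simp [h]
  · field_simp
    ring

/-- the antiderivative computation for fA -/
lemma fA_integral {c d : ℝ} (hd : 0 < d) (hdc : d < c) :
    ∫ y in (0:ℝ)..d, y / (d * Real.sqrt ((c^2 - y^2) * (d^2 - y^2)))
      = (1/d) * (Real.log (c + d) - Real.log (Real.sqrt (c^2 - d^2))) := by
  have h1 : (0:ℝ) < c^2 - d^2 := by nlinarith
  have key := intervalIntegral.integral_eq_sub_of_hasDerivAt_of_le (a := (0:ℝ)) (b := d)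
    (f := fun y => -(1/d) * Real.log (Real.sqrt (c^2 - y^2) + Real.sqrt (d^2 - y^2)))
    (f' := fun y => y / (d * Real.sqrt ((c^2 - y^2) * (d^2 - y^2)))) hd.le
    ?_ ?_ (II_fA hd hdc)
  · rw [key]
    have e0 : Real.sqrt (c^2 - 0^2) = c := by
      rw [show c^2 - 0^2 = c^2 by ring]; exact Real.sqrt_sq (by linarith)
    have e1 : Real.sqrt (d^2 - 0^2) = d := by
      rw [show d^2 - 0^2 = d^2 by ring]; exact Real.sqrt_sq hd.le
    have e2 : Real.sqrt (d^2 - d^2) = 0 := by simp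
    simp only [e0, e1, e2]
    rw [add_zero]
    ring
  · apply ContinuousOn.mul continuousOn_const
    apply ContinuousOn.log
    · apply Continuous.continuousOn
      continuity
    · intro y hy
      have : Real.sqrt (c^2 - d^2) ≤ Real.sqrt (c^2 - y^2) := by
        apply Real.sqrt_le_sqrt; nlinarith [hy.1, hy.2]
      have h2 : 0 < Real.sqrt (c^2 - d^2) := Real.sqrt_pos.mpr h1
      have h3 : 0 ≤ Real.sqrt (d^2 - y^2) := Real.sqrt_nonneg _
      exact ne_of_gt (by linarith)
  · intro y hy
    have hA : (0:ℝ) < c^2 - y^2 := by nlinarith [hy.1, hy.2]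
    have hB : (0:ℝ) < d^2 - y^2 := by nlinarith [hy.1, hy.2]
    have ha : (0:ℝ) < Real.sqrt (c^2 - y^2) := Real.sqrt_pos.mpr hA
    have hb : (0:ℝ) < Real.sqrt (d^2 - y^2) := Real.sqrt_pos.mpr hB
    have dA : HasDerivAt (fun y : ℝ => c^2 - y^2) (-(2*y)) y := by
      simpa using (hasDerivAt_pow 2 y).const_sub (c^2)
    have dB : HasDerivAt (fun y : ℝ => d^2 - y^2) (-(2*y)) y := by
      simpa using (hasDerivAt_pow 2 y).const_sub (d^2)
    have dsA := dA.sqrt hA.ne'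
    have dsB := dB.sqrt hB.ne'
    have dsum := dsA.add dsB
    have hlog := (dsum.log (add_pos ha hb).ne')
    have final := hlog.const_mul (-(1/d))
    refine final.congr_deriv ?_
    simp only [Pi.add_apply, Real.sqrt_mul hA.le]
    have hab : (0:ℝ) < Real.sqrt (c^2 - y^2) + Real.sqrt (d^2 - y^2) := by linarith
    field_simp
    ring


set_option maxHeartbeats 1000000 in
lemma fB_pointwise {c d : ℝ} (hd : 0 < d) (hdc : d < c) {y : ℝ} (hy : y ∈ Ioc 0 d) :
    |(d - y) / (d * Real.sqrt ((c^2 - y^2) * (d^2 - y^2))) - (c*(c+y))⁻¹|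
      ≤ (6*c*(c-d)/d^3) * (c-y)⁻¹ := by
  have hc : 0 < c := hd.trans hdc
  have hcd : 0 < c - d := by linarith
  rcases eq_or_lt_of_le hy.2 with h | h
  · subst h
    rw [show (y:ℝ) - y = 0 by ring, zero_div, zero_sub, abs_neg,
      abs_of_nonneg (by positivity),
      show (6*c*(c-y)/y^3) * (c-y)⁻¹ = 6*c/y^3 from by field_simp,
      inv_eq_one_div, div_le_div_iff₀ (by positivity) (by positivity)]
    have k1 : y^3 < c^3 := by
      nlinarith [mul_pos hd hd, mul_pos hc hc, mul_pos hd hc, sq_nonneg (y + c), sq_nonneg (y - c)]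
    have k2 : (0:ℝ) ≤ c^2*y := by positivity
    nlinarith [k1, k2]
  · have hy0 : 0 < y := hy.1
    have hcy : 0 < c - y := by linarith
    have hdy : 0 < d - y := by linarith
    set A := Real.sqrt (c - y) with hA
    set B := Real.sqrt (c + y) with hB
    set Dm := Real.sqrt (d - y) with hDm
    set Dp := Real.sqrt (d + y) with hDp
    have hA2 : A^2 = c - y := Real.sq_sqrt hcy.le
    have hB2 : B^2 = c + y := Real.sq_sqrt (by linarith)
    have hDm2 : Dm^2 = d - y := Real.sq_sqrt hdy.le
    have hDp2 : Dp^2 = d + y := Real.sq_sqrt (by linarith)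
    have hApos : 0 < A := Real.sqrt_pos.mpr hcy
    have hBpos : 0 < B := Real.sqrt_pos.mpr (by linarith)
    have hDmpos : 0 < Dm := Real.sqrt_pos.mpr hdy
    have hDppos : 0 < Dp := Real.sqrt_pos.mpr (by linarith)
    have hSfac : Real.sqrt ((c^2 - y^2) * (d^2 - y^2)) = A*B*(Dm*Dp) := by
      rw [show (c^2 - y^2) * (d^2 - y^2) = ((c-y)*(c+y)) * ((d-y)*(d+y)) by ring,
        Real.sqrt_mul (by nlinarith), Real.sqrt_mul hcy.le, Real.sqrt_mul hdy.le]
    have hquot : (d - y) / (d * Real.sqrt ((c^2 - y^2) * (d^2 - y^2))) - (c*(c+y))⁻¹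
        = (c*B*Dm - d*A*Dp) / (c*d*A*B^2*Dp) := by
      rw [hSfac, ← hB2, show d - y = Dm^2 from hDm2.symm]
      field_simp
    have hnum : (c*B*Dm - d*A*Dp) * (c*B*Dm + d*A*Dp)
        = (c-d) * ((c+d)*(c*d - y^2) - y*(c^2+d^2)) := by
      have e : (c*B*Dm)^2 - (d*A*Dp)^2 = (c-d) * ((c+d)*(c*d - y^2) - y*(c^2+d^2)) := by
        rw [mul_pow, mul_pow, mul_pow, mul_pow, hA2, hB2, hDm2, hDp2]
        ring
      linear_combination e
    have hP : |(c+d)*(c*d - y^2) - y*(c^2+d^2)| ≤ 6*c^3 := by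
      have e1 : |c+d| ≤ 2*c := by rw [abs_of_pos (by linarith)]; linarith
      have f1 : y^2 ≤ d^2 := by nlinarith
      have f2 : d^2 ≤ c*d := by nlinarith
      have e2 : |c*d - y^2| ≤ c^2 := abs_le.mpr ⟨by nlinarith [f1, f2], by nlinarith [f1, f2]⟩
      have e3 : |y*(c^2+d^2)| ≤ 2*c^3 := by
        rw [abs_of_nonneg (by positivity)]; nlinarith
      calc |(c+d)*(c*d - y^2) - y*(c^2+d^2)|
          ≤ |(c+d)*(c*d - y^2)| + |y*(c^2+d^2)| := abs_sub _ _
        _ = |c+d| * |c*d - y^2| + |y*(c^2+d^2)| := by rw [abs_mul]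
        _ ≤ 2*c*c^2 + 2*c^3 := add_le_add
            (mul_le_mul e1 e2 (abs_nonneg _) (by positivity)) e3
        _ ≤ 6*c^3 := by nlinarith
    have hden1 : 0 < c*B*Dm + d*A*Dp := by positivity
    have hnum_abs : |c*B*Dm - d*A*Dp| ≤ (c-d) * (6*c^3) / (d*A*Dp) := by
      rw [show c*B*Dm - d*A*Dp
          = (c-d) * ((c+d)*(c*d - y^2) - y*(c^2+d^2)) / (c*B*Dm + d*A*Dp)
        from by rw [← hnum]; field_simp]
      rw [abs_div, abs_of_pos hden1, abs_mul, abs_of_pos hcd]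
      apply div_le_div₀ (by positivity) (mul_le_mul_of_nonneg_left hP hcd.le)
        (by positivity) (by nlinarith [mul_pos (mul_pos hc hBpos) hDmpos])
    have hden2 : c^2*d^3*(c-y) ≤ (d*A*Dp) * (c*d*A*B^2*Dp) := by
      have e : (d*A*Dp) * (c*d*A*B^2*Dp) = c*d^2*(A^2*B^2*Dp^2) := by ring
      rw [e, hA2, hB2, hDp2]
      have m1 : c*d ≤ (c+y)*(d+y) := by nlinarith
      nlinarith [mul_le_mul_of_nonneg_left m1 (show (0:ℝ) ≤ c*d^2*(c-y) by positivity)]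
    rw [hquot, abs_div, abs_of_pos (by positivity : (0:ℝ) < c*d*A*B^2*Dp)]
    calc |c*B*Dm - d*A*Dp| / (c*d*A*B^2*Dp)
        ≤ ((c-d) * (6*c^3) / (d*A*Dp)) / (c*d*A*B^2*Dp) :=
          div_le_div₀ (by positivity) hnum_abs (by positivity) le_rfl
      _ = (c-d) * (6*c^3) / ((d*A*Dp) * (c*d*A*B^2*Dp)) := by rw [div_div]
      _ ≤ (c-d) * (6*c^3) / (c^2*d^3*(c-y)) :=
          div_le_div₀ (by positivity) le_rfl (by positivity) hden2
      _ = (6*c*(c-d)/d^3) * (c-y)⁻¹ := by field_simp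


lemma cg_integral {c d : ℝ} (hd : 0 < d) (hdc : d < c) :
    ∫ y in (0:ℝ)..d, (c*(c+y))⁻¹ = (1/c) * (Real.log (c+d) - Real.log c) := by
  have hc : 0 < c := hd.trans hdc
  have key := intervalIntegral.integral_eq_sub_of_hasDerivAt (a := (0:ℝ)) (b := d)
    (f := fun y => (1/c) * Real.log (c + y)) (f' := fun y => (c*(c+y))⁻¹) ?_ ?_
  · rw [key]; rw [add_zero]; ring
  · intro x hx
    rw [uIcc_of_le hd.le] at hx
    have h1 : (0:ℝ) < c + x := by have := hx.1; linarith
    have := (((hasDerivAt_id x).const_add c).log h1.ne').const_mul (1/c)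
    refine this.congr_deriv ?_
    field_simp
    exact div_self h1.ne'
  · apply ContinuousOn.intervalIntegrable
    apply ContinuousOn.inv₀ (by fun_prop)
    intro x hx
    rw [uIcc_of_le hd.le] at hx
    have := hx.1
    positivity
lemma inv_lin_integral {c d : ℝ} (hd : 0 < d) (hdc : d < c) :
    ∫ y in (0:ℝ)..d, (c - y)⁻¹ = Real.log c - Real.log (c - d) := by
  have hc : 0 < c := hd.trans hdc
  have key := intervalIntegral.integral_eq_sub_of_hasDerivAt (a := (0:ℝ)) (b := d)
    (f := fun y => -Real.log (c - y)) (f' := fun y => (c - y)⁻¹) ?_ ?_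
  · rw [key]; rw [sub_zero]; ring
  · intro x hx
    rw [uIcc_of_le hd.le] at hx
    have h1 : (0:ℝ) < c - x := by have := hx.2; linarith
    have := (((hasDerivAt_id x).const_sub c).log h1.ne').neg
    refine this.congr_deriv ?_
    field_simp
    exact div_self h1.ne'
  · apply ContinuousOn.intervalIntegrable
    apply ContinuousOn.inv₀ (by fun_prop)
    intro x hx
    rw [uIcc_of_le hd.le] at hx
    have := hx.2
    have h1 : (0:ℝ) < c - x := by linarith
    exact h1.ne'

lemma fB_integral_est {c d : ℝ} (hd : 0 < d) (hdc : d < c) :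
    |(∫ y in (0:ℝ)..d, (d - y) / (d * Real.sqrt ((c^2 - y^2) * (d^2 - y^2))))
        - (1/c) * (Real.log (c+d) - Real.log c)|
      ≤ (6*c*(c-d)/d^3) * (Real.log c - Real.log (c - d)) := by
  have hc : 0 < c := hd.trans hdc
  have hcd : 0 < c - d := by linarith
  have hgi : IntervalIntegrable (fun y => (c*(c+y))⁻¹) volume 0 d := by
    apply ContinuousOn.intervalIntegrable
    apply ContinuousOn.inv₀ (by fun_prop)
    intro x hx
    rw [uIcc_of_le hd.le] at hx
    have := hx.1
    positivity
  have hbi : IntervalIntegrable (fun y => (6*c*(c-d)/d^3) * (c-y)⁻¹) volume 0 d := by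
    apply ContinuousOn.intervalIntegrable
    apply ContinuousOn.mul continuousOn_const
    apply ContinuousOn.inv₀ (by fun_prop)
    intro x hx
    rw [uIcc_of_le hd.le] at hx
    have := hx.2
    have h1 : (0:ℝ) < c - x := by linarith
    exact h1.ne'
  have key := intervalIntegral.norm_integral_le_of_norm_le (μ := volume) (a := (0:ℝ)) (b := d)
    (f := fun y => (d - y) / (d * Real.sqrt ((c^2 - y^2) * (d^2 - y^2))) - (c*(c+y))⁻¹)
    (g := fun y => (6*c*(c-d)/d^3) * (c-y)⁻¹) hd.le ?_ hbi
  · rw [intervalIntegral.integral_sub (II_fB hd hdc) hgi, Real.norm_eq_abs] at key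
    rw [cg_integral hd hdc] at key
    rw [intervalIntegral.integral_const_mul, inv_lin_integral hd hdc] at key
    have hnn : 0 ≤ (6*c*(c-d)/d^3) * (Real.log c - Real.log (c - d)) := by
      apply mul_nonneg (by positivity)
      have := Real.log_le_log hcd (by linarith : c - d ≤ c)
      linarith
    exact key
  · filter_upwards with y hy
    rw [Real.norm_eq_abs]
    exact fB_pointwise hd hdc hy


set_option maxHeartbeats 1000000 in
lemma I1_est {c : ℝ} (hc : 0 < c) {η : ℝ} (hη : 0 < η) (hη' : η ≤ 1/4) :
    |I1 c (c*(1-η)) - (1/(2*c)) * Real.log (8/η)| ≤ (25/c) * η * Real.log (1/η) := by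
  set d := c*(1-η) with hdd
  have hd : 0 < d := by rw [hdd]; nlinarith
  have hdc : d < c := by rw [hdd]; nlinarith
  have hd34 : 3*c/4 ≤ d := by rw [hdd]; nlinarith
  set lc := Real.log c with hlc
  set l2 := Real.log (2 - η) with hl2
  set lη := Real.log η with hlη
  set e := (∫ y in (0:ℝ)..d, (d - y) / (d * Real.sqrt ((c^2 - y^2) * (d^2 - y^2))))
    - (1/c) * (Real.log (c+d) - Real.log c) with he_def
  -- log facts
  have hcd : c + d = c*(2-η) := by rw [hdd]; ring
  have hcmd : c - d = c*η := by rw [hdd]; ring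
  have hc2d2 : c^2 - d^2 = c^2*(η*(2-η)) := by rw [hdd]; ring
  have hlog_cd : Real.log (c+d) = lc + l2 := by
    rw [hcd, Real.log_mul hc.ne' (by linarith), hlc, hl2]
  have hlog_sqrt : Real.log (Real.sqrt (c^2 - d^2)) = lc + lη/2 + l2/2 := by
    rw [Real.log_sqrt (by nlinarith), hc2d2,
      Real.log_mul (pow_ne_zero 2 hc.ne') (mul_ne_zero hη.ne' (by linarith : (0:ℝ) < 2 - η).ne'),
      Real.log_mul hη.ne' (by linarith), Real.log_pow]
    push_cast
    rw [hlc, hlη, hl2]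
    ring
  have hlog_cmd : Real.log (c - d) = lc + lη := by
    rw [hcmd, Real.log_mul hc.ne' hη.ne', hlc, hlη]
  have hlog8 : Real.log (8/η) = 3*Real.log 2 - lη := by
    rw [Real.log_div (by norm_num) hη.ne', show (8:ℝ) = 2^3 by norm_num, Real.log_pow, hlη]
    push_cast; ring
  have hL : Real.log (1/η) = -lη := by rw [one_div, Real.log_inv, hlη]
  -- size facts about logs
  have hL1 : 1 ≤ -lη := by
    have h4 : (4:ℝ) ≤ 1/η := by rw [le_div_iff₀ hη]; linarith
    have := Real.log_le_log (by norm_num : (0:ℝ) < 4) h4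
    rw [hL] at this
    have h42 : Real.log 4 = 2*Real.log 2 := by
      rw [show (4:ℝ) = 2^2 by norm_num, Real.log_pow]; push_cast; ring
    nlinarith [Real.log_two_gt_d9, this, h42]
  have hlog2L : Real.log 2 ≤ -lη := by
    have h4 : (2:ℝ) ≤ 1/η := by rw [le_div_iff₀ hη]; linarith
    have := Real.log_le_log (by norm_num : (0:ℝ) < 2) h4
    rwa [hL] at this
  have hl2ub : l2 ≤ Real.log 2 := by
    rw [hl2]; exact Real.log_le_log (by linarith) (by linarith)
  have hl2lb : Real.log 2 - l2 ≤ η := by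
    have h1 : Real.log (2/(2-η)) ≤ 2/(2-η) - 1 :=
      Real.log_le_sub_one_of_pos (div_pos (by norm_num) (by linarith))
    rw [Real.log_div (by norm_num) (by linarith), ← hl2] at h1
    have h2 : 2/(2-η) - 1 ≤ η := by
      rw [div_sub' (by linarith : (2:ℝ) - η ≠ 0), div_le_iff₀ (by linarith)]
      nlinarith
    linarith
  -- coefficient facts
  have hu2 : 1/(2*d) - 1/(2*c) ≤ η/c := by
    rw [show 1/(2*d) - 1/(2*c) = (c-d)/(2*c*d) from by field_simp,
      div_le_div_iff₀ (by positivity) hc]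
    rw [hcmd]
    nlinarith
  have hu1 : 0 ≤ 1/(2*d) - 1/(2*c) := by
    rw [sub_nonneg, div_le_div_iff₀ (by positivity) (by positivity)]
    nlinarith
  have hv2 : 1/(2*d) + 1/c ≤ 2/c := by
    have h1 : 1/(2*d) ≤ 1/c := by rw [div_le_div_iff₀ (by positivity) hc]; linarith
    have h2c : 2/c = 1/c + 1/c := by ring
    linarith
  have hv1 : 0 ≤ 1/(2*d) + 1/c := by positivity
  -- error bound
  have he : |e| ≤ (15/c) * η * (-lη) := by
    have h1 := fB_integral_est hd hdc
    rw [← he_def, hlog_cmd] at h1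
    have h2 : (6*c*(c-d)/d^3) * (lc - (lc + lη)) = (6*c^2*η/d^3) * (-lη) := by
      rw [hcmd]; ring
    rw [h2] at h1
    apply h1.trans
    rw [show (15:ℝ)/c * η * (-lη) = ((15*η)/c) * (-lη) by ring]
    apply mul_le_mul_of_nonneg_right _ (by linarith)
    rw [div_le_div_iff₀ (by positivity) hc]
    have hcube : 27*c^3/64 ≤ d^3 := by
      nlinarith [pow_le_pow_left₀ (by positivity : (0:ℝ) ≤ 3*c/4) hd34 3]
    nlinarith [mul_le_mul_of_nonneg_left hcube hη.le]
  clear_value d lc l2 lη e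
  -- the value of I1
  have hI1 : I1 c d = (1/(2*d))*(l2 - lη) + (1/c)*l2 + e := by
    rw [I1]
    rw [show (fun y => 1 / Real.sqrt ((c^2 - y^2) * (d^2 - y^2)))
        = (fun y => y / (d * Real.sqrt ((c^2 - y^2) * (d^2 - y^2)))
          + (d - y) / (d * Real.sqrt ((c^2 - y^2) * (d^2 - y^2)))) from
      funext fun y => by rw [one_div]; exact f_split hd y]
    rw [intervalIntegral.integral_add (II_fA hd hdc) (II_fB hd hdc),
      fA_integral hd hdc, hlog_cd, hlog_sqrt]
    rw [he_def, hlog_cd, ← hlc]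
    ring
  rw [hI1, hlog8]
  -- final estimate
  have key : (1/(2*d))*(l2 - lη) + (1/c)*l2 + e - (1/(2*c))*(3*Real.log 2 - lη)
      = (1/(2*d) - 1/(2*c))*(Real.log 2 - lη) + (1/(2*d) + 1/c)*(l2 - Real.log 2) + e := by
    ring
  rw [key]
  have b1 : |(1/(2*d) - 1/(2*c))*(Real.log 2 - lη)| ≤ (η/c) * (2*(-lη)) := by
    rw [abs_mul, abs_of_nonneg hu1, abs_of_nonneg (by linarith [Real.log_pos (by norm_num : (1:ℝ) < 2)])]
    apply mul_le_mul hu2 (by linarith) (by linarith [Real.log_pos (by norm_num : (1:ℝ) < 2)]) (by positivity)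
  have b2 : |(1/(2*d) + 1/c)*(l2 - Real.log 2)| ≤ (2/c) * η := by
    rw [abs_mul, abs_of_nonneg hv1]
    apply mul_le_mul hv2 _ (abs_nonneg _) (by positivity)
    rw [abs_le]
    constructor <;> linarith
  calc |(1/(2*d) - 1/(2*c))*(Real.log 2 - lη) + (1/(2*d) + 1/c)*(l2 - Real.log 2) + e|
      ≤ |(1/(2*d) - 1/(2*c))*(Real.log 2 - lη) + (1/(2*d) + 1/c)*(l2 - Real.log 2)| + |e| :=
        abs_add_le _ _
    _ ≤ |(1/(2*d) - 1/(2*c))*(Real.log 2 - lη)| + |(1/(2*d) + 1/c)*(l2 - Real.log 2)| + |e| :=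
        by linarith [abs_add_le ((1/(2*d) - 1/(2*c))*(Real.log 2 - lη)) ((1/(2*d) + 1/c)*(l2 - Real.log 2))]
    _ ≤ (η/c) * (2*(-lη)) + (2/c) * η + (15/c) * η * (-lη) := by linarith
    _ ≤ 25/c * η * Real.log (1/η) := by
        rw [hL]
        have hee : η ≤ η * (-lη) := by nlinarith
        have : (η/c) * (2*(-lη)) = (2/c) * (η * (-lη)) := by ring
        rw [this]
        have h2 : (2/c) * η ≤ (2/c) * (η * (-lη)) :=
          mul_le_mul_of_nonneg_left hee (by positivity)
        have hnn : (0:ℝ) ≤ η * -lη := mul_nonneg hη.le (by linarith)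
        have h3 : (2:ℝ)/c*(η*(-lη)) + 2/c*(η*(-lη)) + 15/c*η*(-lη) = 19/c*(η*(-lη)) := by ring
        have h4 : (19:ℝ)/c*(η*(-lη)) ≤ 25/c*(η*(-lη)) := by
          apply mul_le_mul_of_nonneg_right _ hnn
          gcongr
          norm_num
        have h5 : (25:ℝ)/c*(η*(-lη)) = 25/c*η*(-lη) := by ring
        linarith

theorem stmt7 (c : ℝ) (hc : 0 < c) :
    ∃ C > 0, ∃ η₀ > 0, ∀ η : ℝ, 0 < η → η < η₀ →
      |I0 c (c * (1 - η)) - Real.pi / (2*c)| ≤ C * η ∧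
      |I1 c (c * (1 - η)) - (1/(2*c)) * Real.log (8/η)| ≤ C * η * Real.log (1/η) := by
  refine ⟨30/c, by positivity, 1/4, by norm_num, fun η hη hη' => ⟨?_, ?_⟩⟩
  · refine (I0_est hc hη hη'.le).trans ?_
    apply mul_le_mul_of_nonneg_right _ hη.le
    gcongr
    linarith [Real.pi_le_four]
  · refine (I1_est hc hη hη'.le).trans ?_
    apply mul_le_mul_of_nonneg_right _ ?_
    · apply mul_le_mul_of_nonneg_right _ hη.le
      gcongr <;> norm_num
    · apply Real.log_nonneg
      rw [le_div_iff₀ hη]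
      linarith
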